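/- Let a, b be coprime positive integers, c := a+b, and λ a nonzero complex number. Then the polynomial x^a·y^b − λ·z^c is irreducible in the polynomial ring ℂ[x,y,z]. -/

import Mathlib

set_option maxHeartbeats 1000000
set_option synthInstance.maxHeartbeats 400000

open MvPolynomial

noncomputable section StmtAux

private lemma finSuccEquiv_C' {n : ℕ} (r : ℂ) :
    (finSuccEquiv ℂ n) (C r) = Polynomial.C (C r) := by
  simp [finSuccEquiv_apply]

/-- If `(C lam * z^c) / y^b` has a `p`-th root in the fraction field of `ℂ[y,z]`,
then `p ∣ b`. -/
private lemma aux_dvd (p b c : ℕ) (hp : 0 < p) (lam : ℂ) (hlam : lam ≠ 0)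
    (t : FractionRing (MvPolynomial (Fin 2) ℂ))
    (ht : t ^ p =
      algebraMap (MvPolynomial (Fin 2) ℂ) _ (C lam * X 1 ^ c) /
        algebraMap (MvPolynomial (Fin 2) ℂ) _ ((X 0 : MvPolynomial (Fin 2) ℂ) ^ b)) :
    p ∣ b := by
  have hinj : Function.Injective (algebraMap (MvPolynomial (Fin 2) ℂ)
      (FractionRing (MvPolynomial (Fin 2) ℂ))) := IsFractionRing.injective _ _
  obtain ⟨f, g, hg, hfg⟩ := IsFractionRing.div_surjective (A := MvPolynomial (Fin 2) ℂ) t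
  have hg0 : g ≠ 0 := nonZeroDivisors.ne_zero hg
  have hφg : algebraMap _ (FractionRing (MvPolynomial (Fin 2) ℂ)) g ≠ 0 := by
    rw [ne_eq, map_eq_zero_iff _ hinj]; exact hg0
  have hX0 : ((X 0 : MvPolynomial (Fin 2) ℂ)) ≠ 0 := X_ne_zero 0
  have hY : algebraMap _ (FractionRing (MvPolynomial (Fin 2) ℂ))
      ((X 0 : MvPolynomial (Fin 2) ℂ) ^ b) ≠ 0 := by
    rw [ne_eq, map_eq_zero_iff _ hinj]
    exact pow_ne_zero _ hX0
  rw [div_eq_iff hφg] at hfg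
  have key : f ^ p * (X 0 : MvPolynomial (Fin 2) ℂ) ^ b = C lam * X 1 ^ c * g ^ p := by
    apply hinj
    rw [map_mul, map_mul, map_pow, map_pow, hfg, mul_pow, ht]
    rw [map_pow]
    field_simp
    rw [map_pow]
  have hf0 : f ≠ 0 := by
    intro h
    rw [h] at key
    rw [zero_pow hp.ne', zero_mul] at key
    have : C lam * (X 1 : MvPolynomial (Fin 2) ℂ) ^ c * g ^ p ≠ 0 := by
      apply mul_ne_zero (mul_ne_zero _ (pow_ne_zero _ (X_ne_zero 1))) (pow_ne_zero _ hg0)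
      simpa using hlam
    exact this key.symm
  have key2 := congrArg (finSuccEquiv ℂ 1) key
  rw [show (1 : Fin 2) = Fin.succ 0 from rfl] at key2
  simp only [map_mul, map_pow, finSuccEquiv_X_succ, finSuccEquiv_C',
    finSuccEquiv_X_zero] at key2
  have hF0 : (finSuccEquiv ℂ 1) f ≠ 0 := by
    rw [ne_eq, map_eq_zero_iff _ (AlgEquiv.injective _)]; exact hf0
  have hG0 : (finSuccEquiv ℂ 1) g ≠ 0 := by
    rw [ne_eq, map_eq_zero_iff _ (AlgEquiv.injective _)]; exact hg0
  have hdeg := congrArg Polynomial.natDegree key2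
  rw [Polynomial.natDegree_mul (pow_ne_zero _ hF0) (pow_ne_zero _ Polynomial.X_ne_zero),
    Polynomial.natDegree_mul
      (mul_ne_zero (by simp [Polynomial.C_eq_zero, MvPolynomial.C_eq_zero, hlam])
        (pow_ne_zero _ (by simp [Polynomial.C_eq_zero, X_ne_zero])))
      (pow_ne_zero _ hG0),
    Polynomial.natDegree_mul (by simp [Polynomial.C_eq_zero, MvPolynomial.C_eq_zero, hlam])
      (pow_ne_zero _ (by simp [Polynomial.C_eq_zero, X_ne_zero]))] at hdeg
  simp only [Polynomial.natDegree_pow, Polynomial.natDegree_X, Polynomial.natDegree_C,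
    mul_one, mul_zero, add_zero, zero_add] at hdeg
  have h1 : p ∣ p * ((finSuccEquiv ℂ 1) g).natDegree - p * ((finSuccEquiv ℂ 1) f).natDegree :=
    Nat.dvd_sub (dvd_mul_right _ _) (dvd_mul_right _ _)
  have h2 : b = p * ((finSuccEquiv ℂ 1) g).natDegree -
      p * ((finSuccEquiv ℂ 1) f).natDegree := by omega
  rwa [← h2] at h1

/-- The key case: `a` odd. -/
private lemma key_odd (a b c : ℕ) (ha : 0 < a) (haodd : Odd a) (hb : 0 < b)
    (hab : Nat.Coprime a b) (lam : ℂ) (hlam : lam ≠ 0) :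
    Irreducible ((X 0 : MvPolynomial (Fin 3) ℂ) ^ a * X 1 ^ b - C lam * X 2 ^ c) := by
  have hinj : Function.Injective (algebraMap (MvPolynomial (Fin 2) ℂ)
      (FractionRing (MvPolynomial (Fin 2) ℂ))) := IsFractionRing.injective _ _
  apply (MulEquiv.irreducible_iff (finSuccEquiv ℂ 2)).mp
  have himg : (finSuccEquiv ℂ 2) ((X 0 : MvPolynomial (Fin 3) ℂ) ^ a * X 1 ^ b
      - C lam * X 2 ^ c) =
      Polynomial.C ((X 0 : MvPolynomial (Fin 2) ℂ) ^ b) * Polynomial.X ^ a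
        - Polynomial.C (C lam * (X 1 : MvPolynomial (Fin 2) ℂ) ^ c) := by
    rw [show (1 : Fin 3) = Fin.succ 0 from rfl, show (2 : Fin 3) = Fin.succ 1 from rfl]
    simp only [map_sub, map_mul, map_pow, finSuccEquiv_X_zero, finSuccEquiv_X_succ,
      finSuccEquiv_C', Polynomial.C_pow, Polynomial.C_mul]
    ring
  rw [himg]
  -- primitivity
  have hprim : (Polynomial.C ((X 0 : MvPolynomial (Fin 2) ℂ) ^ b) * Polynomial.X ^ a
      - Polynomial.C (C lam * (X 1 : MvPolynomial (Fin 2) ℂ) ^ c)).IsPrimitive := by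
    intro r hr
    have hcoeffs := (Polynomial.C_dvd_iff_dvd_coeff r _).mp hr
    have h1 : r ∣ (X 0 : MvPolynomial (Fin 2) ℂ) ^ b := by
      have h := hcoeffs a
      rwa [Polynomial.coeff_sub, Polynomial.coeff_C_mul, Polynomial.coeff_X_pow,
        if_pos rfl, Polynomial.coeff_C, if_neg ha.ne', mul_one, sub_zero] at h
    have h2 : r ∣ C lam * (X 1 : MvPolynomial (Fin 2) ℂ) ^ c := by
      have h := hcoeffs 0
      rw [Polynomial.coeff_sub, Polynomial.coeff_C_mul, Polynomial.coeff_X_pow,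
        if_neg (fun hh => ha.ne' hh.symm), Polynomial.coeff_C, if_pos rfl, mul_zero,
        zero_sub, dvd_neg] at h
      exact h
    have hu : IsUnit (C lam : MvPolynomial (Fin 2) ℂ) := hlam.isUnit.map (C : ℂ →+* _)
    have h2' : r ∣ (X 1 : MvPolynomial (Fin 2) ℂ) ^ c := by
      obtain ⟨v, hv⟩ := hu.exists_left_inv
      have h3 : r ∣ v * (C lam * X 1 ^ c) := h2.mul_left v
      rwa [← mul_assoc, hv, one_mul] at h3
    -- transfer to `Polynomial (MvPolynomial (Fin 1) ℂ)`
    have d1 : (finSuccEquiv ℂ 1) r ∣ Polynomial.X ^ b := by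
      have := map_dvd (finSuccEquiv ℂ 1) h1
      rwa [map_pow, finSuccEquiv_X_zero] at this
    have d2 : (finSuccEquiv ℂ 1) r ∣ Polynomial.C ((X 0 : MvPolynomial (Fin 1) ℂ) ^ c) := by
      have := map_dvd (finSuccEquiv ℂ 1) h2'
      rwa [map_pow, show (1 : Fin 2) = Fin.succ 0 from rfl, finSuccEquiv_X_succ,
        ← Polynomial.C_pow] at this
    have hdeg : ((finSuccEquiv ℂ 1) r).degree ≤ 0 := by
      have hC0 : (Polynomial.C ((X 0 : MvPolynomial (Fin 1) ℂ) ^ c)) ≠ 0 := by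
        simp [Polynomial.C_eq_zero, X_ne_zero]
      have := Polynomial.degree_le_of_dvd d2 hC0
      simpa [Polynomial.degree_C (pow_ne_zero c (X_ne_zero (0 : Fin 1)))] using this
    have hrC : (finSuccEquiv ℂ 1) r =
        Polynomial.C (((finSuccEquiv ℂ 1) r).coeff 0) :=
      Polynomial.eq_C_of_degree_le_zero hdeg
    have hs : (((finSuccEquiv ℂ 1) r).coeff 0) ∣ (1 : MvPolynomial (Fin 1) ℂ) := by
      rw [hrC] at d1
      have := (Polynomial.C_dvd_iff_dvd_coeff _ _).mp d1 b
      rwa [Polynomial.coeff_X_pow, if_pos rfl] at this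
    have hsu : IsUnit (((finSuccEquiv ℂ 1) r).coeff 0) := isUnit_of_dvd_one hs
    have : IsUnit ((finSuccEquiv ℂ 1) r) := by
      rw [hrC]; exact hsu.map Polynomial.C
    have := this.map (finSuccEquiv ℂ 1).symm
    rwa [AlgEquiv.symm_apply_apply] at this
  apply hprim.irreducible_of_irreducible_map_of_injective hinj
  -- now over the fraction field
  set K := FractionRing (MvPolynomial (Fin 2) ℂ) with hK
  set φ := algebraMap (MvPolynomial (Fin 2) ℂ) K with hφ
  have hmap : (Polynomial.C ((X 0 : MvPolynomial (Fin 2) ℂ) ^ b) * Polynomial.X ^ a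
        - Polynomial.C (C lam * (X 1 : MvPolynomial (Fin 2) ℂ) ^ c)).map φ =
      Polynomial.C (φ ((X 0 : MvPolynomial (Fin 2) ℂ) ^ b)) * Polynomial.X ^ a
        - Polynomial.C (φ (C lam * (X 1 : MvPolynomial (Fin 2) ℂ) ^ c)) := by
    simp [Polynomial.map_sub, Polynomial.map_mul, Polynomial.map_pow]
  rw [hmap]
  have hY : φ ((X 0 : MvPolynomial (Fin 2) ℂ) ^ b) ≠ 0 := by
    rw [ne_eq, map_eq_zero_iff _ hinj]
    exact pow_ne_zero _ (X_ne_zero 0)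
  have hfact : Polynomial.C (φ ((X 0 : MvPolynomial (Fin 2) ℂ) ^ b)) * Polynomial.X ^ a
        - Polynomial.C (φ (C lam * (X 1 : MvPolynomial (Fin 2) ℂ) ^ c)) =
      Polynomial.C (φ ((X 0 : MvPolynomial (Fin 2) ℂ) ^ b)) *
        (Polynomial.X ^ a - Polynomial.C
          (φ (C lam * (X 1 : MvPolynomial (Fin 2) ℂ) ^ c) /
            φ ((X 0 : MvPolynomial (Fin 2) ℂ) ^ b))) := by
    rw [_root_.mul_sub (Polynomial.C (φ ((X 0 : MvPolynomial (Fin 2) ℂ) ^ b))),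
      ← Polynomial.C_mul, mul_div_cancel₀ _ hY]
  rw [hfact]
  have hirr : Irreducible (Polynomial.X ^ a - Polynomial.C
      (φ (C lam * (X 1 : MvPolynomial (Fin 2) ℂ) ^ c) /
        φ ((X 0 : MvPolynomial (Fin 2) ℂ) ^ b))) := by
    apply X_pow_sub_C_irreducible_of_odd haodd
    intro q hq hqa t ht
    have hqb : q ∣ b := aux_dvd q b c hq.pos lam hlam t ht
    have : (q : ℕ) ∣ Nat.gcd a b := Nat.dvd_gcd hqa hqb
    rw [hab] at this
    exact hq.ne_one (Nat.dvd_one.mp this)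
  have hunit : IsUnit (Polynomial.C (φ ((X 0 : MvPolynomial (Fin 2) ℂ) ^ b))) :=
    (isUnit_iff_ne_zero.mpr hY).map Polynomial.C
  obtain ⟨u, hu⟩ := hunit
  rw [← hu]
  exact Associated.irreducible ⟨u, mul_comm _ _⟩ hirr

end StmtAux

/-- For coprime positive integers `a, b`, `c = a + b`, and `λ ≠ 0`, the polynomial
`x^a·y^b − λ·z^c` is irreducible in `ℂ[x,y,z]`. -/
theorem stmt4 (a b c : ℕ) (ha : 0 < a) (hb : 0 < b) (hab : Nat.Coprime a b)
    (hc : c = a + b) (lam : ℂ) (hlam : lam ≠ 0) :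
    Irreducible ((X 0 : MvPolynomial (Fin 3) ℂ) ^ a * X 1 ^ b - C lam * X 2 ^ c) := by
  rcases Nat.even_or_odd a with hae | hao
  · have hbo : Odd b := by
      rcases Nat.even_or_odd b with hbe | hbo
      · exfalso
        have : 2 ∣ Nat.gcd a b := Nat.dvd_gcd hae.two_dvd hbe.two_dvd
        rw [hab] at this
        omega
      · exact hbo
    have h := key_odd b a c hb hbo ha hab.symm lam hlam
    have h2 := (MulEquiv.irreducible_iff (renameEquiv ℂ (Equiv.swap (0 : Fin 3) 1))).mpr h
    convert h2 using 1
    simp only [renameEquiv_apply, map_sub, map_mul, map_pow, rename_X, rename_C,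
      Equiv.swap_apply_left, Equiv.swap_apply_right]
    rw [Equiv.swap_apply_of_ne_of_ne (by decide) (by decide)]
    ring
  · exact key_odd a b c ha hao hb hab lam hlam
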